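/- Let n ≥ 2, let p₁ < p₂ < ⋯ < pₙ < 0 be reals, w₁, …, wₙ > 0, and let β ∈ ℝ satisfy 1 + p_{n−1} − pₙ < β < 1. Then there exists x₀ > 0 such that for all x ≥ x₀: Σ_{i=1}^n w_i·(x + x^β)^{p_i−1} ≤ wₙ·x^{pₙ−1}. -/

import Mathlib

open Finset

private lemma bernoulli_aux {t q : ℝ} (ht0 : 0 < t) (ht1 : t ≤ 1) (hq : q < 0) :
    (1 + t) ^ (q - 1) ≤ 1 - t / 2 := by
  set r : ℝ := 1 - q with hr
  have hr1 : (1 : ℝ) ≤ r := by rw [hr]; linarith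
  have hbern : 1 + r * t ≤ (1 + t) ^ r :=
    one_add_mul_self_le_rpow_one_add (by linarith) hr1
  have h1 : (1 + t) ^ (q - 1) = ((1 + t) ^ r)⁻¹ := by
    rw [← Real.rpow_neg (by linarith)]
    norm_num [hr]
  rw [h1]
  have hpos : (0:ℝ) < 1 + r * t := by nlinarith
  have h2 : ((1 + t) ^ r)⁻¹ ≤ (1 + r * t)⁻¹ := by
    apply inv_anti₀ hpos hbern
  refine h2.trans ?_
  rw [inv_le_iff_one_le_mul₀' hpos]
  nlinarith [mul_le_mul_of_nonneg_left ht1 (mul_nonneg (by linarith : (0:ℝ) ≤ r) ht0.le),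
    mul_nonneg (by linarith : (0:ℝ) ≤ r - 1) ht0.le]

/-- Key asymptotic comparison in the proof of Proposition 2.13: for large `x`,
`U₁'(x + x^β) = Σ wᵢ (x + x^β)^{pᵢ-1} ≤ wₙ x^{pₙ-1} = U₂'(x)` whenever
`1 + p_{n-1} - pₙ < β < 1`. -/
theorem linear_sharing_marginal_comparison
    (n : ℕ) (hn : 2 ≤ n)
    (p : Fin n → ℝ) (hpmono : StrictMono p) (hpneg : ∀ i, p i < 0)
    (w : Fin n → ℝ) (hw : ∀ i, 0 < w i)
    (β : ℝ) (hβ1 : β < 1)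
    (hβ2 : 1 + p ⟨n - 2, by omega⟩ - p ⟨n - 1, by omega⟩ < β) :
    ∃ x₀ : ℝ, 0 < x₀ ∧ ∀ x : ℝ, x₀ ≤ x →
      (∑ i, w i * (x + x ^ β) ^ (p i - 1)) ≤
        w ⟨n - 1, by omega⟩ * x ^ (p ⟨n - 1, by omega⟩ - 1) := by
  set m : Fin n := ⟨n - 1, by omega⟩ with hm
  set k : Fin n := ⟨n - 2, by omega⟩ with hk
  set q : ℝ := p m with hq
  have hqneg : q < 0 := hpneg m
  set W : ℝ := ∑ i ∈ univ.erase m, w i with hW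
  have hkm : k ≠ m := by
    simp only [hk, hm, Ne, Fin.mk.injEq]; omega
  have hWpos : 0 < W := by
    apply Finset.sum_pos (fun i _ => hw i)
    exact ⟨k, Finset.mem_erase.2 ⟨hkm, mem_univ k⟩⟩
  set e : ℝ := p k + 1 - q - β with he
  have heneg : e < 0 := by rw [he]; linarith
  set K : ℝ := w m / (2 * W) with hK
  have hKpos : 0 < K := div_pos (hw m) (by linarith)
  refine ⟨max 1 (K ^ (1 / e)), lt_of_lt_of_le one_pos (le_max_left _ _), ?_⟩
  intro x hx
  have hx1 : (1 : ℝ) ≤ x := le_trans (le_max_left _ _) hx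
  have hx0 : (0 : ℝ) < x := by linarith
  -- the key smallness: x ^ e ≤ K
  have hxe : x ^ e ≤ K := by
    have h1 : x ^ e ≤ (K ^ (1/e)) ^ e :=
      Real.rpow_le_rpow_of_nonpos (Real.rpow_pos_of_pos hKpos _)
        (le_trans (le_max_right _ _) hx) heneg.le
    refine h1.trans_eq ?_
    rw [← Real.rpow_mul hKpos.le, one_div_mul_cancel heneg.ne, Real.rpow_one]
  -- set t = x^(β-1), so x + x^β = x*(1+t)
  set t : ℝ := x ^ (β - 1) with ht
  have ht0 : 0 < t := Real.rpow_pos_of_pos hx0 _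
  have ht1 : t ≤ 1 := Real.rpow_le_one_of_one_le_of_nonpos hx1 (by linarith)
  have hxt : x + x ^ β = x * (1 + t) := by
    have : x * t = x ^ β := by
      rw [ht]
      nth_rewrite 1 [← Real.rpow_one x]
      rw [← Real.rpow_add hx0]
      ring_nf
    rw [← this]; ring
  have hb1 : (1 : ℝ) ≤ x * (1 + t) := by nlinarith
  have hbx : x ≤ x * (1 + t) := by nlinarith
  -- bound the terms i ≠ m
  have hstepA : ∀ i ∈ univ.erase m,
      w i * (x + x ^ β) ^ (p i - 1) ≤ w i * x ^ (p k - 1) := by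
    intro i hi
    have him : i ≠ m := (Finset.mem_erase.1 hi).1
    have hik : i ≤ k := by
      have hvm : (m : ℕ) = n - 1 := rfl
      have hvk : (k : ℕ) = n - 2 := rfl
      have h' : (i : ℕ) ≠ n - 1 := by
        rw [← hvm]; exact fun h => him (Fin.ext h)
      have h2 := i.2
      rw [Fin.le_def, hvk]
      omega
    have hpik : p i ≤ p k := hpmono.monotone hik
    have h1 : (x + x ^ β) ^ (p i - 1) ≤ (x + x ^ β) ^ (p k - 1) := by
      rw [hxt]
      exact Real.rpow_le_rpow_of_exponent_le hb1 (by linarith)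
    have h2 : (x + x ^ β) ^ (p k - 1) ≤ x ^ (p k - 1) := by
      rw [hxt]
      exact Real.rpow_le_rpow_of_nonpos hx0 hbx (by linarith [hpneg k])
    exact mul_le_mul_of_nonneg_left (h1.trans h2) (hw i).le
  -- the Bernoulli bound for the m-term
  have hstepB : w m * (x + x ^ β) ^ (q - 1) ≤
      w m * x ^ (q - 1) - (w m / 2) * x ^ (q + β - 2) := by
    have hmul : (x + x ^ β) ^ (q - 1) = x ^ (q - 1) * (1 + t) ^ (q - 1) := by
      rw [hxt, Real.mul_rpow hx0.le (by linarith)]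
    have hber : (1 + t) ^ (q - 1) ≤ 1 - t / 2 := bernoulli_aux ht0 ht1 hqneg
    have hxqt : x ^ (q - 1) * t = x ^ (q + β - 2) := by
      rw [ht, ← Real.rpow_add hx0]; ring_nf
    have hxq0 : 0 < x ^ (q - 1) := Real.rpow_pos_of_pos hx0 _
    calc w m * (x + x ^ β) ^ (q - 1)
        = w m * (x ^ (q - 1) * (1 + t) ^ (q - 1)) := by rw [hmul]
      _ ≤ w m * (x ^ (q - 1) * (1 - t / 2)) := by
          apply mul_le_mul_of_nonneg_left _ (hw m).le
          exact mul_le_mul_of_nonneg_left hber hxq0.le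
      _ = w m * x ^ (q - 1) - (w m / 2) * (x ^ (q - 1) * t) := by ring
      _ = w m * x ^ (q - 1) - (w m / 2) * x ^ (q + β - 2) := by rw [hxqt]
  -- smallness step
  have hstepD : W * x ^ (p k - 1) ≤ (w m / 2) * x ^ (q + β - 2) := by
    have hsplit : x ^ (p k - 1) = x ^ e * x ^ (q + β - 2) := by
      rw [← Real.rpow_add hx0, he]; ring_nf
    rw [hsplit, ← mul_assoc]
    apply mul_le_mul_of_nonneg_right _ (Real.rpow_pos_of_pos hx0 _).le
    calc W * x ^ e ≤ W * K := mul_le_mul_of_nonneg_left hxe hWpos.le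
      _ = w m / 2 := by rw [hK]; field_simp
  -- combine
  calc (∑ i, w i * (x + x ^ β) ^ (p i - 1))
      = (∑ i ∈ univ.erase m, w i * (x + x ^ β) ^ (p i - 1))
          + w m * (x + x ^ β) ^ (q - 1) := by
        rw [hq, Finset.sum_erase_add]
        exact mem_univ m
    _ ≤ W * x ^ (p k - 1) + (w m * x ^ (q - 1) - (w m / 2) * x ^ (q + β - 2)) := by
        apply add_le_add _ hstepB
        rw [hW, Finset.sum_mul]
        exact Finset.sum_le_sum hstepA
    _ ≤ w m * x ^ (q - 1) := by linarith
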